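/- Given equations α = μ(1 − e^{−τΔ}), φ = e^{−τΔ}, γ²(1+θ²) = (σ²/(2τ))(1 − e^{−2τΔ}) + ω²(1 + e^{−2τΔ}), θγ² = −ω² e^{−τΔ}, with 0 < φ < 1, γ² > 0, θ < 0, and Δ > 0, the solution is μ = α/(1−φ), τ = −(1/Δ) log φ, σ² = −(2/Δ) · γ²(φ + θ²φ + θφ² + θ)/(φ(1−φ²)) · log φ, ω² = −θγ²/φ. -/
import Mathlib


open Real

/-- ARMA(1,1) reparametrization of the noisy discretized equidistant OU process: given
`α = μ(1 − e^{−τΔ})`, `φ = e^{−τΔ}`, `γ²(1+θ²) = (σ²/(2τ))(1 − e^{−2τΔ}) + ω²(1 + e^{−2τΔ})`,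
`θγ² = −ω² e^{−τΔ}`, with `0 < φ < 1`, `γ² > 0`, `θ < 0` and `Δ > 0`, the solution is
`μ = α/(1−φ)`, `τ = −(1/Δ) log φ`,
`σ² = −(2/Δ) γ²(φ + θ²φ + θφ² + θ)/(φ(1−φ²)) log φ`, `ω² = −θγ²/φ`. -/
theorem ARMA11_reparametrization_solution
    (Δ α φ θ γ2 μ τ σ2 ω2 : ℝ) (hΔ : 0 < Δ) (hφ0 : 0 < φ) (hφ1 : φ < 1)
    (hγ : 0 < γ2) (hθ : θ < 0)
    (h1 : α = μ * (1 - Real.exp (-τ * Δ)))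
    (h2 : φ = Real.exp (-τ * Δ))
    (h3 : γ2 * (1 + θ ^ 2) =
      σ2 / (2 * τ) * (1 - Real.exp (-2 * τ * Δ)) + ω2 * (1 + Real.exp (-2 * τ * Δ)))
    (h4 : θ * γ2 = -ω2 * Real.exp (-τ * Δ)) :
    μ = α / (1 - φ) ∧
    τ = -(1 / Δ) * Real.log φ ∧
    σ2 = -(2 / Δ) * (γ2 * (φ + θ ^ 2 * φ + θ * φ ^ 2 + θ) / (φ * (1 - φ ^ 2))) *
      Real.log φ ∧
    ω2 = -(θ * γ2) / φ := by
  have hlog : Real.log φ = -τ * Δ := by rw [h2, Real.log_exp]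
  have hτ : τ = -(1 / Δ) * Real.log φ := by
    rw [hlog]; field_simp
  have hτpos : 0 < τ := by
    rw [hτ]
    have hlogneg : Real.log φ < 0 := Real.log_neg hφ0 hφ1
    have : 0 < 1 / Δ := by positivity
    nlinarith
  have hexp2 : Real.exp (-2 * τ * Δ) = φ ^ 2 := by
    rw [sq, h2, ← Real.exp_add]; ring_nf
  have hφ2 : (1 : ℝ) - φ ^ 2 > 0 := by nlinarith
  have hω : ω2 = -(θ * γ2) / φ := by
    rw [h4, ← h2]; field_simp
  have h1φ : (1:ℝ) - φ ≠ 0 := by linarith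
  have hμ : μ = α / (1 - φ) := by
    rw [h1, ← h2, mul_div_assoc, div_self h1φ, mul_one]
  refine ⟨hμ, hτ, ?_, hω⟩
  rw [hexp2, hω] at h3
  have hτne : (2 : ℝ) * τ ≠ 0 := by positivity
  have hσ : σ2 = 2 * τ * (γ2 * (φ + θ ^ 2 * φ + θ * φ ^ 2 + θ) / (φ * (1 - φ ^ 2))) := by
    field_simp at h3 ⊢
    nlinarith [h3, sq_nonneg φ]
  rw [hσ, hτ]; ring
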